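/- Let F : C → H be η-strongly monotone and L-Lipschitz, μ ∈ (0, 2η/L²), and set τ = 1 - √(1 - μ(2η - μL²)) ∈ (0,1). Then for every ν ∈ (0, μ) and all x, y ∈ C, ‖(y - νF(y)) - x‖ ≤ (1 - ντ/μ)‖y - x‖ + ν‖F(x)‖. -/

import Mathlib

open RealInnerProductSpace Filter Topology

/-- For `F : C → H` `η`-strongly monotone and `L`-Lipschitz, `μ ∈ (0, 2η/L²)` and
`τ = 1 - √(1 - μ(2η - μL²))`, for every `ν ∈ (0, μ)` and all `x, y ∈ C`:
`‖(y - νF(y)) - x‖ ≤ (1 - ντ/μ)‖y - x‖ + ν‖F(x)‖`. -/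
theorem stmt3 {H : Type*} [NormedAddCommGroup H] [InnerProductSpace ℝ H]
    (C : Set H) (hCne : C.Nonempty) (hCc : IsClosed C) (hCv : Convex ℝ C)
    (F : H → H) (η L : ℝ) (hη : 0 < η) (hL : 0 < L)
    (hmono : ∀ x ∈ C, ∀ y ∈ C, η * ‖x - y‖ ^ 2 ≤ ⟪F x - F y, x - y⟫)
    (hlip : ∀ x ∈ C, ∀ y ∈ C, ‖F x - F y‖ ≤ L * ‖x - y‖)
    (μ : ℝ) (hμ : μ ∈ Set.Ioo (0 : ℝ) (2 * η / L ^ 2))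
    (τ : ℝ) (hτ : τ = 1 - Real.sqrt (1 - μ * (2 * η - μ * L ^ 2))) :
    ∀ ν ∈ Set.Ioo (0 : ℝ) μ, ∀ x ∈ C, ∀ y ∈ C,
      ‖(y - ν • F y) - x‖ ≤ (1 - ν * τ / μ) * ‖y - x‖ + ν * ‖F x‖ := by
  obtain ⟨hμ0, hμ2⟩ := hμ
  intro ν hν x hx y hy
  obtain ⟨hν0, hνμ⟩ := hν
  have hμne : μ ≠ 0 := ne_of_gt hμ0
  set a := y - x with ha
  set b := F y - F x with hb
  have hinner : η * ‖a‖ ^ 2 ≤ ⟪b, a⟫ := hmono y hy x hx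
  have hlipab : ‖b‖ ≤ L * ‖a‖ := hlip y hy x hx
  have hτ0 : 1 - τ = Real.sqrt (1 - μ * (2 * η - μ * L ^ 2)) := by rw [hτ]; ring
  have hsnn : (0:ℝ) ≤ 1 - τ := hτ0 ▸ Real.sqrt_nonneg _
  have key : ‖a - μ • b‖ ≤ (1 - τ) * ‖a‖ := by
    rcases eq_or_ne (‖a‖) 0 with h0 | h0
    · have ha0 : a = 0 := norm_eq_zero.mp h0
      have hb0 : b = 0 := by
        have : ‖b‖ ≤ 0 := by simpa [h0] using hlipab
        exact norm_le_zero_iff.mp this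
      simp [ha0, hb0]
    · have hapos : 0 < ‖a‖ := lt_of_le_of_ne (norm_nonneg a) (Ne.symm h0)
      have hsq : ‖a - μ • b‖ ^ 2 ≤ (1 - μ * (2 * η - μ * L ^ 2)) * ‖a‖ ^ 2 := by
        have hexp : ‖a - μ • b‖ ^ 2 = ‖a‖ ^ 2 - 2 * (μ * ⟪b, a⟫) + μ ^ 2 * ‖b‖ ^ 2 := by
          rw [norm_sub_sq_real, real_inner_smul_right, norm_smul]
          simp [abs_of_pos hμ0, real_inner_comm]
          ring
        have hb2 : ‖b‖ ^ 2 ≤ L ^ 2 * ‖a‖ ^ 2 := by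
          nlinarith [norm_nonneg b, norm_nonneg a]
        rw [hexp]
        nlinarith [hinner, sq_nonneg μ]
      have hc : 0 ≤ 1 - μ * (2 * η - μ * L ^ 2) := by
        have h1 : 0 ≤ (1 - μ * (2 * η - μ * L ^ 2)) * ‖a‖ ^ 2 :=
          le_trans (sq_nonneg _) hsq
        exact (mul_nonneg_iff_of_pos_right (pow_pos hapos 2)).mp h1
      calc ‖a - μ • b‖ = Real.sqrt (‖a - μ • b‖ ^ 2) := by
              rw [Real.sqrt_sq (norm_nonneg _)]
        _ ≤ Real.sqrt ((1 - μ * (2 * η - μ * L ^ 2)) * ‖a‖ ^ 2) := Real.sqrt_le_sqrt hsq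
        _ = (1 - τ) * ‖a‖ := by
              rw [Real.sqrt_mul hc, Real.sqrt_sq (norm_nonneg _), hτ0]
  have hdecomp : y - ν • F y - (x - ν • F x) = (1 - ν / μ) • a + (ν / μ) • (a - μ • b) := by
    rw [ha, hb]
    match_scalars <;> field_simp <;> ring
  have hl0 : 0 ≤ ν / μ := le_of_lt (div_pos hν0 hμ0)
  have hl1 : 0 ≤ 1 - ν / μ := by
    have : ν / μ ≤ 1 := (div_le_one hμ0).mpr (le_of_lt hνμ)
    linarith
  have hmid : ‖y - ν • F y - (x - ν • F x)‖ ≤ (1 - ν * τ / μ) * ‖a‖ := by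
    calc ‖y - ν • F y - (x - ν • F x)‖
        = ‖(1 - ν / μ) • a + (ν / μ) • (a - μ • b)‖ := by rw [hdecomp]
      _ ≤ ‖(1 - ν / μ) • a‖ + ‖(ν / μ) • (a - μ • b)‖ := norm_add_le _ _
      _ = (1 - ν / μ) * ‖a‖ + (ν / μ) * ‖a - μ • b‖ := by
            rw [norm_smul, norm_smul, Real.norm_of_nonneg hl1, Real.norm_of_nonneg hl0]
      _ ≤ (1 - ν / μ) * ‖a‖ + (ν / μ) * ((1 - τ) * ‖a‖) := by
            gcongr
      _ = (1 - ν * τ / μ) * ‖a‖ := by field_simp; ring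
  calc ‖(y - ν • F y) - x‖ = ‖(y - ν • F y - (x - ν • F x)) - ν • F x‖ := by
        congr 1; abel
    _ ≤ ‖y - ν • F y - (x - ν • F x)‖ + ‖ν • F x‖ := norm_sub_le _ _
    _ ≤ (1 - ν * τ / μ) * ‖a‖ + ν * ‖F x‖ := by
        rw [norm_smul, Real.norm_of_nonneg (le_of_lt hν0)]
        exact add_le_add hmid le_rfl
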